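/- (Depth-first exploration: surplus edges point toward the root) In the depth-first exploration of a cluster rooted at x, every unexplored (surplus) edge e ∈ U_x can be written as e = {a,b} with a, b in the cluster, such that the unique path from a to x in the depth-first spanning tree T_x passes through b. -/

import Mathlib

/- STATEMENT 9: in the depth-first exploration rooted at `x`, every surplus edge
`e ∈ U_x` of the terminal state can be written as `{a,b}` with the unique path from
`a` to `x` in the depth-first spanning tree passing through `b`. -/

/-- State of the depth-first exploration: explored vertices `X`, tree edges `T`,
explored edges `E`, unexplored (surplus) edges `U`. -/
structure DFSState (V : Type) where
  X : Finset V
  T : Finset (Sym2 V)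
  E : Finset (Sym2 V)
  U : Finset (Sym2 V)

/-- The current spanning tree, as a graph. -/
def DFSState.tree {V : Type} (σ : DFSState V) : SimpleGraph V :=
  SimpleGraph.fromEdgeSet (↑σ.T)

/-- Active vertices: explored vertices with some incident edge of `G` neither
explored nor marked unexplored. -/
def DFSState.active {V : Type} [DecidableEq V] (G : SimpleGraph V) (σ : DFSState V) : Set V :=
  {a | a ∈ σ.X ∧ ∃ b, G.Adj a b ∧ s(a, b) ∉ σ.E ∪ σ.U}

/-- One step of the depth-first exploration of `G` with configuration `ω`, rooted at
`x`. -/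
def DFSStep {V : Type} [DecidableEq V] (G : SimpleGraph V) (ω : Sym2 V → Bool) (x : V)
    (σ σ' : DFSState V) : Prop :=
  ∃ a b, G.Adj a b ∧ a ∈ σ.X ∧ s(a, b) ∉ σ.E ∪ σ.U ∧
    (∀ a' ∈ σ.active G, σ.tree.dist x a' ≤ σ.tree.dist x a) ∧
    ((b ∈ σ.X ∧ σ' = ⟨σ.X, σ.T, σ.E, insert s(a, b) σ.U⟩) ∨
     (b ∉ σ.X ∧ ω s(a, b) = true ∧
        σ' = ⟨insert b σ.X, insert s(a, b) σ.T, insert s(a, b) σ.E, σ.U⟩) ∨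
     (b ∉ σ.X ∧ ω s(a, b) = false ∧ σ' = ⟨σ.X, σ.T, insert s(a, b) σ.E, σ.U⟩))

/-- Reachability from the initial state of the exploration rooted at `x`. -/
def DFSReachable {V : Type} [DecidableEq V] (G : SimpleGraph V) (ω : Sym2 V → Bool)
    (x : V) (σ : DFSState V) : Prop :=
  Relation.ReflTransGen (DFSStep G ω x) ⟨{x}, ∅, ∅, ∅⟩ σ


open SimpleGraph

set_option linter.unusedSectionVars false
variable {V : Type} [DecidableEq V]

private lemma dist_eq_length' {G : SimpleGraph V} (hG : G.IsAcyclic) {u v : V}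
    {p : G.Walk u v} (hp : p.IsPath) : G.dist u v = p.length := by
  refine le_antisymm (SimpleGraph.dist_le p) ?_
  obtain ⟨w, hw⟩ := SimpleGraph.Reachable.exists_walk_length_eq_dist ⟨p⟩
  have h2 : (⟨p, hp⟩ : G.Path u v) = w.toPath := hG.path_unique _ _
  have h3 : p = w.bypass := congrArg Subtype.val h2
  rw [← hw, h3]
  exact Walk.length_bypass_le w

private lemma support_mapLe' {G G' : SimpleGraph V} (h : G ≤ G') {u v : V} (p : G.Walk u v) :
    (p.mapLe h).support = p.support := by
  simp only [Walk.mapLe, Walk.support_map, Hom.ofLE]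
  exact List.map_id' _

private lemma length_mapLe' {G G' : SimpleGraph V} (h : G ≤ G') {u v : V} (p : G.Walk u v) :
    (p.mapLe h).length = p.length := by
  simp

private lemma exists_edge_end {G : SimpleGraph V} :
    ∀ {u v : V} (q : G.Walk u v), u ≠ v → ∃ e ∈ q.edges, v ∈ e := by
  intro u v q
  induction q with
  | nil => intro h; exact absurd rfl h
  | @cons u y v h q ih =>
    intro huv
    by_cases hyv : y = v
    · exact ⟨s(u, y), by simp, hyv ▸ Sym2.mem_mk_right u y⟩
    · obtain ⟨e, he, hve⟩ := ih hyv
      exact ⟨e, by simp [he], hve⟩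

private lemma edge_at_pendant {G' : SimpleGraph V} {b a : V}
    (hnb : ∀ z, G'.Adj b z → z = a) {e : Sym2 V}
    (hedge : e ∈ G'.edgeSet) (hbe : b ∈ e) : e = s(b, a) := by
  induction e using Sym2.ind with
  | _ u w =>
    rw [SimpleGraph.mem_edgeSet] at hedge
    rw [Sym2.mem_iff] at hbe
    rcases hbe with rfl | rfl
    · rw [hnb w hedge]
    · rw [hnb u hedge.symm, Sym2.eq_swap]

private lemma no_cycle_at_pendant {G' : SimpleGraph V} {b a : V}
    (hnb : ∀ z, G'.Adj b z → z = a) :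
    ∀ (c : G'.Walk b b), ¬ c.IsCycle := by
  intro c hc
  cases c with
  | nil => exact hc.ne_nil rfl
  | @cons u y w h q =>
    have hy : y = a := hnb y h
    have hqb : y ≠ b := fun hh => (G'.ne_of_adj h) hh.symm
    obtain ⟨e, he, hbe⟩ := exists_edge_end q hqb
    have he' := edge_at_pendant hnb (q.edges_subset_edgeSet he) hbe
    have ht : (Walk.cons h q).edges.Nodup := hc.isCircuit.isTrail.edges_nodup
    rw [Walk.edges_cons, List.nodup_cons] at ht
    rw [← hy] at he'
    exact ht.1 (he' ▸ he)

private lemma pendant_acyclic {s : Set (Sym2 V)} {a b : V} (hab : a ≠ b)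
    (hbs : ∀ e ∈ s, b ∉ e)
    (hacyc : (SimpleGraph.fromEdgeSet s).IsAcyclic) :
    (SimpleGraph.fromEdgeSet (insert s(a, b) s)).IsAcyclic := by
  have hnb : ∀ z, (SimpleGraph.fromEdgeSet (insert s(a, b) s)).Adj b z → z = a := by
    intro z hz
    rw [SimpleGraph.fromEdgeSet_adj] at hz
    rcases Set.mem_insert_iff.mp hz.1 with h | h
    · rw [Sym2.eq_iff] at h
      rcases h with ⟨h1, _⟩ | ⟨_, h2⟩
      · exact absurd h1.symm hab
      · exact h2
    · exact absurd (Sym2.mem_mk_left b z) (hbs _ h)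
  intro v c hc
  by_cases hbc : b ∈ c.support
  · exact no_cycle_at_pendant hnb (c.rotate b hbc) (hc.rotate hbc)
  · have hT : ∀ e ∈ c.edges, e ∈ (SimpleGraph.fromEdgeSet s).edgeSet := by
      intro e he
      have hin := c.edges_subset_edgeSet he
      have hbe : b ∉ e := by
        intro hb'
        have heq := edge_at_pendant hnb hin hb'
        exact hbc (c.fst_mem_support_of_mem_edges (heq ▸ he))
      rw [SimpleGraph.edgeSet_fromEdgeSet] at hin ⊢
      refine ⟨?_, hin.2⟩
      rcases Set.mem_insert_iff.mp hin.1 with heq | hs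
      · exact absurd (heq ▸ (Sym2.mem_mk_right a b)) hbe
      · exact hs
    exact hacyc (c.transfer _ hT) (hc.transfer hT)

private lemma walk_support_subset {s : Set (Sym2 V)} {X : Finset V}
    (hTX : ∀ e ∈ s, ∀ y ∈ e, y ∈ X) :
    ∀ {u v : V} (p : (SimpleGraph.fromEdgeSet s).Walk u v), u ∈ X → ∀ w ∈ p.support, w ∈ X := by
  intro u v p
  induction p with
  | nil =>
    intro hu w hw
    rw [Walk.support_nil, List.mem_singleton] at hw
    exact hw ▸ hu
  | @cons u y v h q ih =>
    intro hu w hw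
    have h' := (SimpleGraph.fromEdgeSet_adj _).mp h
    have hy : y ∈ X := hTX _ h'.1 y (Sym2.mem_mk_right u y)
    rw [Walk.support_cons, List.mem_cons] at hw
    rcases hw with rfl | hw
    · exact hu
    · exact ih hy w hw

private lemma notmem_union_mono {A B C D : Finset (Sym2 V)} (hAC : A ⊆ C) (hBD : B ⊆ D)
    {e : Sym2 V} (h : e ∉ C ∪ D) : e ∉ A ∪ B :=
  fun hm => h (Finset.union_subset_union hAC hBD hm)

variable {V : Type} [DecidableEq V]

open SimpleGraph in
/-- The inductive invariant of depth-first exploration. -/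
private def DFSInv (G : SimpleGraph V) (x : V) (σ : DFSState V) : Prop :=
  x ∈ σ.X ∧
  (∀ e ∈ σ.T, ∀ y ∈ e, y ∈ σ.X) ∧
  σ.tree.IsAcyclic ∧
  (∀ u ∈ σ.X, σ.tree.Reachable u x) ∧
  (∀ e ∈ σ.U, ∃ a b : V, e = s(a, b) ∧ a ∈ σ.X ∧ b ∈ σ.X ∧
      ∃ p : σ.tree.Walk a x, p.IsPath ∧ b ∈ p.support) ∧
  (∀ u v : V, u ∈ σ.active G → v ∈ σ.active G →
      σ.tree.dist x v ≤ σ.tree.dist x u →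
      ∃ p : σ.tree.Walk u x, p.IsPath ∧ v ∈ p.support)

open SimpleGraph in
private lemma DFSInv_init (G : SimpleGraph V) (x : V) :
    DFSInv G x ⟨{x}, ∅, ∅, ∅⟩ := by
  have htree : (⟨{x}, ∅, ∅, ∅⟩ : DFSState V).tree = ⊥ := by
    simp [DFSState.tree]
  refine ⟨Finset.mem_singleton_self x, ?_, ?_, ?_, ?_, ?_⟩
  · intro e he; exact absurd he (Finset.notMem_empty e)
  · rw [htree]; exact isAcyclic_bot
  · intro u hu
    rw [Finset.mem_singleton] at hu
    rw [hu]
  · intro e he; exact absurd he (Finset.notMem_empty e)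
  · intro u v hu hv _
    have hu1 : u = x := Finset.mem_singleton.mp hu.1
    have hv1 : v = x := Finset.mem_singleton.mp hv.1
    rw [hu1, hv1]
    exact ⟨Walk.nil, Walk.IsPath.nil, Walk.start_mem_support _⟩

open SimpleGraph in
private lemma DFSInv_step {G : SimpleGraph V} {ω : Sym2 V → Bool} {x : V}
    {σ σ' : DFSState V} (hinv : DFSInv G x σ) (hstep : DFSStep G ω x σ σ') :
    DFSInv G x σ' := by
  obtain ⟨hx, hTX, hacyc, hreach, hU, hchain⟩ := hinv
  obtain ⟨a, b, hadj, haX, hnEU, hmax, hcase⟩ := hstep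
  have ha_act : a ∈ σ.active G := ⟨haX, b, hadj, hnEU⟩
  rcases hcase with ⟨hbX, rfl⟩ | ⟨hbX, hω, rfl⟩ | ⟨hbX, hω, rfl⟩
  · -- case 1 : surplus edge is recorded
    have hb_act : b ∈ σ.active G := ⟨hbX, a, hadj.symm, by rwa [Sym2.eq_swap]⟩
    refine ⟨hx, hTX, hacyc, hreach, ?_, ?_⟩
    · intro e he
      rcases Finset.mem_insert.mp he with rfl | he
      · obtain ⟨p, hp, hbp⟩ := hchain a b ha_act hb_act (hmax b hb_act)
        exact ⟨a, b, rfl, haX, hbX, p, hp, hbp⟩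
      · exact hU e he
    · intro u v hu hv hd
      obtain ⟨hu1, cu, hcu1, hcu2⟩ := hu
      obtain ⟨hv1, cv, hcv1, hcv2⟩ := hv
      exact hchain u v
        ⟨hu1, cu, hcu1, notmem_union_mono (Finset.Subset.refl _) (Finset.subset_insert _ _) hcu2⟩
        ⟨hv1, cv, hcv1, notmem_union_mono (Finset.Subset.refl _) (Finset.subset_insert _ _) hcv2⟩
        hd
  · -- case 2 : a tree edge is added
    have hab : a ≠ b := hadj.ne
    have hbT : ∀ e ∈ (↑σ.T : Set (Sym2 V)), b ∉ e :=
      fun e he hbe => hbX (hTX e he b hbe)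
    have hTX' : ∀ e ∈ (↑σ.T : Set (Sym2 V)), ∀ y ∈ e, y ∈ σ.X :=
      fun e he => hTX e he
    have hle : σ.tree ≤ fromEdgeSet (insert s(a, b) (↑σ.T : Set (Sym2 V))) :=
      fromEdgeSet_mono (Set.subset_insert _ _)
    have hadj2 : (fromEdgeSet (insert s(a, b) (↑σ.T : Set (Sym2 V)))).Adj a b :=
      (fromEdgeSet_adj _).mpr ⟨Set.mem_insert _ _, hab⟩
    have hacyc2 : (fromEdgeSet (insert s(a, b) (↑σ.T : Set (Sym2 V)))).IsAcyclic :=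
      pendant_acyclic hab hbT hacyc
    have hbnot : ∀ {u v : V} (p : σ.tree.Walk u v), u ∈ σ.X → b ∉ p.support :=
      fun p hu hb' => hbX (walk_support_subset hTX' p hu b hb')
    have htree' : (⟨insert b σ.X, insert s(a, b) σ.T, insert s(a, b) σ.E, σ.U⟩ :
        DFSState V).tree = fromEdgeSet (insert s(a, b) (↑σ.T : Set (Sym2 V))) := by
      rw [DFSState.tree, Finset.coe_insert]
    refine ⟨Finset.mem_insert_of_mem hx, ?_, ?_, ?_, ?_, ?_⟩
    · intro e he y hy
      rcases Finset.mem_insert.mp he with rfl | he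
      · rcases Sym2.mem_iff.mp hy with rfl | rfl
        · exact Finset.mem_insert_of_mem haX
        · exact Finset.mem_insert_self _ _
      · exact Finset.mem_insert_of_mem (hTX e he y hy)
    · rw [htree']; exact hacyc2
    · rw [htree']
      intro u hu
      rcases Finset.mem_insert.mp hu with rfl | hu
      · exact hadj2.symm.reachable.trans ((hreach a haX).mono hle)
      · exact (hreach u hu).mono hle
    · rw [htree']
      intro e he
      obtain ⟨a', b', heq, ha', hb', p, hp, hbp⟩ := hU e he
      exact ⟨a', b', heq, Finset.mem_insert_of_mem ha', Finset.mem_insert_of_mem hb',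
        p.mapLe hle, hp.mapLe _, by rw [support_mapLe']; exact hbp⟩
    · rw [htree']
      intro u v hu hv hd
      obtain ⟨hu1, cu, hcu1, hcu2⟩ := hu
      obtain ⟨hv1, cv, hcv1, hcv2⟩ := hv
      have hdist_eq : ∀ w ∈ σ.X,
          (fromEdgeSet (insert s(a, b) (↑σ.T : Set (Sym2 V)))).dist x w
            = σ.tree.dist x w := by
        intro w hw
        obtain ⟨q⟩ := hreach w hw
        calc (fromEdgeSet (insert s(a, b) (↑σ.T : Set (Sym2 V)))).dist x w
            = (fromEdgeSet (insert s(a, b) (↑σ.T : Set (Sym2 V)))).dist w x := SimpleGraph.dist_comm ..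
          _ = (q.bypass.mapLe hle).length := dist_eq_length' hacyc2 (q.bypass_isPath.mapLe _)
          _ = q.bypass.length := length_mapLe' _ _
          _ = σ.tree.dist w x := (dist_eq_length' hacyc q.bypass_isPath).symm
          _ = σ.tree.dist x w := SimpleGraph.dist_comm ..
      by_cases hub : u = b
      · obtain rfl : b = u := hub.symm
        by_cases hvb : v = b
        · obtain rfl : b = v := hvb.symm
          obtain ⟨q⟩ := hreach a haX
          have hcons : (Walk.cons hadj2.symm (q.bypass.mapLe hle)).IsPath := by
            rw [Walk.cons_isPath_iff]
            exact ⟨q.bypass_isPath.mapLe _,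
              by rw [support_mapLe']; exact hbnot _ haX⟩
          exact ⟨Walk.cons hadj2.symm (q.bypass.mapLe hle), hcons, Walk.start_mem_support _⟩
        · have hvX : v ∈ σ.X := (Finset.mem_insert.mp hv1).resolve_left hvb
          have hv_act : v ∈ σ.active G :=
            ⟨hvX, cv, hcv1,
              notmem_union_mono (Finset.subset_insert _ _) (Finset.Subset.refl _) hcv2⟩
          obtain ⟨p, hpp, hvp⟩ := hchain a v ha_act hv_act (hmax v hv_act)
          refine ⟨Walk.cons hadj2.symm (p.mapLe hle), ?_, ?_⟩
          · rw [Walk.cons_isPath_iff]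
            exact ⟨hpp.mapLe _, by rw [support_mapLe']; exact hbnot p haX⟩
          · rw [Walk.support_cons]
            exact List.mem_cons_of_mem _ (by rw [support_mapLe']; exact hvp)
      · have huX : u ∈ σ.X := (Finset.mem_insert.mp hu1).resolve_left hub
        have hu_act : u ∈ σ.active G :=
          ⟨huX, cu, hcu1,
            notmem_union_mono (Finset.subset_insert _ _) (Finset.Subset.refl _) hcu2⟩
        by_cases hvb : v = b
        · obtain rfl : b = v := hvb.symm
          exfalso
          -- dist x b = dist x a + 1 > dist x u, contradiction with hd
          have hdistb : (fromEdgeSet (insert s(a, b) (↑σ.T : Set (Sym2 V)))).dist x b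
              = σ.tree.dist x a + 1 := by
            obtain ⟨q⟩ := hreach a haX
            have hcons : (Walk.cons hadj2.symm (q.bypass.mapLe hle)).IsPath := by
              rw [Walk.cons_isPath_iff]
              exact ⟨q.bypass_isPath.mapLe _,
                by rw [support_mapLe']; exact hbnot _ haX⟩
            calc (fromEdgeSet (insert s(a, b) (↑σ.T : Set (Sym2 V)))).dist x b
                = (fromEdgeSet (insert s(a, b) (↑σ.T : Set (Sym2 V)))).dist b x := SimpleGraph.dist_comm ..
              _ = (Walk.cons hadj2.symm (q.bypass.mapLe hle)).length :=
                  dist_eq_length' hacyc2 hcons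
              _ = (q.bypass.mapLe hle).length + 1 := Walk.length_cons _ _
              _ = q.bypass.length + 1 := by rw [length_mapLe']
              _ = σ.tree.dist a x + 1 := by rw [dist_eq_length' hacyc q.bypass_isPath]
              _ = σ.tree.dist x a + 1 := by rw [SimpleGraph.dist_comm]
          rw [hdistb, hdist_eq u huX] at hd
          have := hmax u hu_act
          omega
        · have hvX : v ∈ σ.X := (Finset.mem_insert.mp hv1).resolve_left hvb
          have hv_act : v ∈ σ.active G :=
            ⟨hvX, cv, hcv1,
              notmem_union_mono (Finset.subset_insert _ _) (Finset.Subset.refl _) hcv2⟩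
          rw [hdist_eq u huX, hdist_eq v hvX] at hd
          obtain ⟨p, hpp, hvp⟩ := hchain u v hu_act hv_act hd
          exact ⟨p.mapLe hle, hpp.mapLe _, by rw [support_mapLe']; exact hvp⟩
  · -- case 3 : closed edge
    refine ⟨hx, hTX, hacyc, hreach, hU, ?_⟩
    intro u v hu hv hd
    obtain ⟨hu1, cu, hcu1, hcu2⟩ := hu
    obtain ⟨hv1, cv, hcv1, hcv2⟩ := hv
    exact hchain u v
      ⟨hu1, cu, hcu1, notmem_union_mono (Finset.subset_insert _ _) (Finset.Subset.refl _) hcu2⟩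
      ⟨hv1, cv, hcv1, notmem_union_mono (Finset.subset_insert _ _) (Finset.Subset.refl _) hcv2⟩
      hd

private lemma DFSInv_of_reachable {G : SimpleGraph V} {ω : Sym2 V → Bool} {x : V}
    {σ : DFSState V} (h : DFSReachable G ω x σ) : DFSInv G x σ := by
  induction h with
  | refl => exact DFSInv_init G x
  | tail _ hstep ih => exact DFSInv_step ih hstep

theorem stmt9 {V : Type} [Fintype V] [DecidableEq V]
    (G : SimpleGraph V) (ω : Sym2 V → Bool) (x : V) (σ : DFSState V)
    (hσ : DFSReachable G ω x σ)
    (hterm : ∀ σ' : DFSState V, ¬ DFSStep G ω x σ σ') :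
    ∀ e ∈ σ.U, ∃ a b : V, e = s(a, b) ∧ a ∈ σ.X ∧ b ∈ σ.X ∧
      ∀ p : σ.tree.Walk a x, p.IsPath → b ∈ p.support := by
  intro e he
  obtain ⟨-, -, hacyc, -, hU, -⟩ := DFSInv_of_reachable hσ
  obtain ⟨a, b, heq, ha, hb, p0, hp0, hbp⟩ := hU e he
  refine ⟨a, b, heq, ha, hb, fun p hp => ?_⟩
  have h2 : (⟨p, hp⟩ : σ.tree.Path a x) = ⟨p0, hp0⟩ := hacyc.path_unique _ _
  have h3 : p = p0 := congrArg Subtype.val h2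
  rw [h3]; exact hbp
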